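/- The volume (3-dimensional Lebesgue measure) of the McCormick envelope of z = xy over the box [x̲, x̄] × [y̲, ȳ], i.e., the set of (x, y, z) satisfying all four McCormick inequalities, equals (1/6)(x̄ − x̲)²(ȳ − y̲)². -/

import Mathlib

open MeasureTheory Set

lemma min_sub_max (a b c d : ℝ) :
    min c d - max a b = min (min (c - a) (d - b)) (min (c - b) (d - a)) := by
  rcases le_total c d with h1 | h1 <;> rcases le_total a b with h2 | h2 <;>
    simp [min_def, max_def] <;> split_ifs <;> linarith

lemma poly_int (a b c A B : ℝ) :
    ∫ t in a..b, (A * (t - c) + B * (t - c) ^ 2) =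
      A * ((b - c) ^ 2 - (a - c) ^ 2) / 2 + B * ((b - c) ^ 3 - (a - c) ^ 3) / 3 := by
  have h := intervalIntegral.integral_comp_sub_right (a := a) (b := b)
    (fun t => A * t + B * t ^ 2) c
  have i1 : IntervalIntegrable (fun t : ℝ => A * t) volume (a - c) (b - c) :=
    Continuous.intervalIntegrable (by fun_prop) _ _
  have i2 : IntervalIntegrable (fun t : ℝ => B * t ^ 2) volume (a - c) (b - c) :=
    Continuous.intervalIntegrable (by fun_prop) _ _
  rw [h, intervalIntegral.integral_add i1 i2,
    intervalIntegral.integral_const_mul, intervalIntegral.integral_const_mul,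
    integral_id, integral_pow]
  norm_num
  ring

lemma inner_int (lx yl yu Q : ℝ) (hlx : 0 < lx) (hy : yl ≤ yu) (hQ0 : 0 ≤ Q)
    (hQ : Q ≤ lx * (yu - yl) / 2) :
    ∫ y in yl..yu, min (min (lx * (y - yl)) (lx * (yu - y))) Q
      = Q * (yu - yl) - Q ^ 2 / lx := by
  have hql : 0 ≤ Q / lx := div_nonneg hQ0 hlx.le
  have hq2 : Q / lx ≤ (yu - yl) / 2 := by
    rw [div_le_div_iff₀ hlx (by norm_num)]; linarith
  have hmc : lx * (Q / lx) = Q := mul_div_cancel₀ _ hlx.ne'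
  set y1 := yl + Q / lx with hy1
  set y2 := yu - Q / lx with hy2
  have h1 : yl ≤ y1 := by simp only [hy1]; linarith
  have h12 : y1 ≤ y2 := by simp only [hy1, hy2]; linarith
  have h2 : y2 ≤ yu := by simp only [hy2]; linarith
  have cont : Continuous (fun y : ℝ => min (min (lx * (y - yl)) (lx * (yu - y))) Q) := by
    fun_prop
  rw [← intervalIntegral.integral_add_adjacent_intervals (b := y1)
      (cont.intervalIntegrable _ _) (cont.intervalIntegrable _ _),
    ← intervalIntegral.integral_add_adjacent_intervals (a := y1) (b := y2)
      (cont.intervalIntegrable _ _) (cont.intervalIntegrable _ _)]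
  have e1 : (∫ y in yl..y1, min (min (lx * (y - yl)) (lx * (yu - y))) Q)
      = ∫ y in yl..y1, (lx * (y - yl) + 0 * (y - yl) ^ 2) := by
    apply intervalIntegral.integral_congr
    intro y hyy
    rw [Set.uIcc_of_le h1] at hyy
    obtain ⟨ha, hb⟩ := hyy
    dsimp only
    have hAB : lx * (y - yl) ≤ lx * (yu - y) := by
      apply mul_le_mul_of_nonneg_left _ hlx.le
      simp only [hy1] at hb; linarith
    have hAQ : lx * (y - yl) ≤ Q := by
      rw [← hmc]
      apply mul_le_mul_of_nonneg_left _ hlx.le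
      simp only [hy1] at hb; linarith
    rw [min_eq_left hAB, min_eq_left hAQ]; ring
  have e2 : (∫ y in y1..y2, min (min (lx * (y - yl)) (lx * (yu - y))) Q)
      = ∫ y in y1..y2, Q := by
    apply intervalIntegral.integral_congr
    intro y hyy
    rw [Set.uIcc_of_le h12] at hyy
    obtain ⟨ha, hb⟩ := hyy
    dsimp only
    have hA : Q ≤ lx * (y - yl) := by
      rw [← hmc]
      apply mul_le_mul_of_nonneg_left _ hlx.le
      simp only [hy1] at ha; linarith
    have hB : Q ≤ lx * (yu - y) := by
      rw [← hmc]
      apply mul_le_mul_of_nonneg_left _ hlx.le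
      simp only [hy2] at hb; linarith
    rw [min_eq_right (le_min hA hB)]
  have e3 : (∫ y in y2..yu, min (min (lx * (y - yl)) (lx * (yu - y))) Q)
      = ∫ y in y2..yu, ((-lx) * (y - yu) + 0 * (y - yu) ^ 2) := by
    apply intervalIntegral.integral_congr
    intro y hyy
    rw [Set.uIcc_of_le h2] at hyy
    obtain ⟨ha, hb⟩ := hyy
    dsimp only
    have hBA : lx * (yu - y) ≤ lx * (y - yl) := by
      apply mul_le_mul_of_nonneg_left _ hlx.le
      simp only [hy2] at ha; linarith
    have hBQ : lx * (yu - y) ≤ Q := by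
      rw [← hmc]
      apply mul_le_mul_of_nonneg_left _ hlx.le
      simp only [hy2] at ha; linarith
    rw [min_eq_right hBA, min_eq_left hBQ]
    all_goals ring
  rw [e1, e2, e3, poly_int, poly_int, intervalIntegral.integral_const]
  have hyl1 : y1 - yl = Q / lx := by simp only [hy1]; try ring
  have hy2u : y2 - yu = -(Q / lx) := by simp only [hy2]; try ring
  have hy21 : y2 - y1 = (yu - yl) - 2 * (Q / lx) := by simp only [hy1, hy2]; try ring
  rw [hyl1, hy2u, hy21]
  simp only [smul_eq_mul]
  field_simp
  ring

lemma outer_int (xl xu ly : ℝ) (hx : xl < xu) (hly : 0 ≤ ly) :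
    ∫ x in xl..xu,
        ((ly * min (x - xl) (xu - x)) * ly - (ly * min (x - xl) (xu - x)) ^ 2 / (xu - xl))
      = (xu - xl) ^ 2 * ly ^ 2 / 6 := by
  set m := (xl + xu) / 2 with hm
  have h1 : xl ≤ m := by simp only [hm]; linarith
  have h2 : m ≤ xu := by simp only [hm]; linarith
  have cont : Continuous (fun x : ℝ =>
      (ly * min (x - xl) (xu - x)) * ly - (ly * min (x - xl) (xu - x)) ^ 2 / (xu - xl)) := by
    fun_prop
  rw [← intervalIntegral.integral_add_adjacent_intervals (b := m)
      (cont.intervalIntegrable _ _) (cont.intervalIntegrable _ _)]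
  have e1 : (∫ x in xl..m,
        ((ly * min (x - xl) (xu - x)) * ly - (ly * min (x - xl) (xu - x)) ^ 2 / (xu - xl)))
      = ∫ x in xl..m, ((ly ^ 2) * (x - xl) + (-(ly ^ 2 / (xu - xl))) * (x - xl) ^ 2) := by
    apply intervalIntegral.integral_congr
    intro x hxx
    rw [Set.uIcc_of_le h1] at hxx
    obtain ⟨ha, hb⟩ := hxx
    dsimp only
    rw [min_eq_left (by simp only [hm] at hb; linarith)]
    ring
  have e2 : (∫ x in m..xu,
        ((ly * min (x - xl) (xu - x)) * ly - (ly * min (x - xl) (xu - x)) ^ 2 / (xu - xl)))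
      = ∫ x in m..xu, ((-(ly ^ 2)) * (x - xu) + (-(ly ^ 2 / (xu - xl))) * (x - xu) ^ 2) := by
    apply intervalIntegral.integral_congr
    intro x hxx
    rw [Set.uIcc_of_le h2] at hxx
    obtain ⟨ha, hb⟩ := hxx
    dsimp only
    rw [min_eq_right (by simp only [hm] at ha; linarith)]
    ring
  rw [e1, e2, poly_int, poly_int]
  have hml : m - xl = (xu - xl) / 2 := by simp only [hm]; ring
  have hmu : m - xu = -((xu - xl) / 2) := by simp only [hm]; ring
  rw [hml, hmu]
  have hne : xu - xl ≠ 0 := by linarith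
  field_simp
  ring

lemma min_sub_max' (a b c d : ℝ) :
    min c d - max a b = min (min (c - a) (d - b)) (min (c - b) (d - a)) := by
  rcases le_total c d with h1 | h1 <;> rcases le_total a b with h2 | h2 <;>
    simp [min_def, max_def] <;> split_ifs <;> linarith

lemma gap_eq' (xl xu yl yu : ℝ) (hly : 0 ≤ yu - yl) (x y : ℝ) :
    min (xu * y + x * yl - xu * yl) (xl * y + x * yu - xl * yu)
      - max (xl * y + x * yl - xl * yl) (xu * y + x * yu - xu * yu)
    = min (min ((xu - xl) * (y - yl)) ((xu - xl) * (yu - y)))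
        ((yu - yl) * min (x - xl) (xu - x)) := by
  rw [min_sub_max', mul_min_of_nonneg _ _ hly]
  rw [min_comm ((xu * y + x * yl - xu * yl) - (xu * y + x * yu - xu * yu))
      ((xl * y + x * yu - xl * yu) - (xl * y + x * yl - xl * yl))]
  congr 1
  · congr 1 <;> ring
  · congr 1 <;> ring

/-- The volume (3-dimensional Lebesgue measure) of the McCormick envelope of
`z = x * y` over the box `[xl, xu] × [yl, yu]` equals
`(xu - xl)² (yu - yl)² / 6`. -/
theorem mccormick_envelope_volume (xl xu yl yu : ℝ) (hx : xl ≤ xu) (hy : yl ≤ yu) :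
    volume {p : ℝ × ℝ × ℝ |
        p.1 ∈ Set.Icc xl xu ∧ p.2.1 ∈ Set.Icc yl yu ∧
        xl * p.2.1 + p.1 * yl - xl * yl ≤ p.2.2 ∧
        xu * p.2.1 + p.1 * yu - xu * yu ≤ p.2.2 ∧
        p.2.2 ≤ xu * p.2.1 + p.1 * yl - xu * yl ∧
        p.2.2 ≤ xl * p.2.1 + p.1 * yu - xl * yu} =
      ENNReal.ofReal ((xu - xl) ^ 2 * (yu - yl) ^ 2 / 6) := by
  set S := {p : ℝ × ℝ × ℝ |
        p.1 ∈ Set.Icc xl xu ∧ p.2.1 ∈ Set.Icc yl yu ∧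
        xl * p.2.1 + p.1 * yl - xl * yl ≤ p.2.2 ∧
        xu * p.2.1 + p.1 * yu - xu * yu ≤ p.2.2 ∧
        p.2.2 ≤ xu * p.2.1 + p.1 * yl - xu * yl ∧
        p.2.2 ≤ xl * p.2.1 + p.1 * yu - xl * yu} with hSdef
  rcases hx.eq_or_lt with heq | hx'
  · subst heq
    have h0 : volume ({xl} ×ˢ (univ : Set (ℝ × ℝ))) = 0 := by
      rw [Measure.volume_eq_prod, Measure.prod_prod, Real.volume_singleton, zero_mul]
    have hsub : S ⊆ {xl} ×ˢ (univ : Set (ℝ × ℝ)) := by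
      rintro p ⟨hp1, -⟩
      exact ⟨by simpa using hp1, trivial⟩
    have hz : volume S = 0 := le_antisymm ((measure_mono hsub).trans h0.le) zero_le
    rw [hz]; simp
  rcases hy.eq_or_lt with heq | hy'
  · subst heq
    have h0 : volume ((univ : Set ℝ) ×ˢ ({yl} ×ˢ (univ : Set ℝ))) = 0 := by
      rw [Measure.volume_eq_prod, Measure.prod_prod, Measure.volume_eq_prod,
        Measure.prod_prod, Real.volume_singleton, zero_mul, mul_zero]
    have hsub : S ⊆ (univ : Set ℝ) ×ˢ ({yl} ×ˢ (univ : Set ℝ)) := by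
      rintro p ⟨-, hp2, -⟩
      exact ⟨trivial, by simpa using hp2, trivial⟩
    have hz : volume S = 0 := le_antisymm ((measure_mono hsub).trans h0.le) zero_le
    rw [hz]; simp
  -- main case
  have hlx : (0:ℝ) < xu - xl := by linarith
  have hly : (0:ℝ) < yu - yl := by linarith
  have hS : MeasurableSet S := by
    rw [hSdef]
    have m1 : Measurable fun p : ℝ × ℝ × ℝ => p.1 := measurable_fst
    have m2 : Measurable fun p : ℝ × ℝ × ℝ => p.2.1 := measurable_snd.fst
    have m3 : Measurable fun p : ℝ × ℝ × ℝ => p.2.2 := measurable_snd.snd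
    refine MeasurableSet.inter (m1 measurableSet_Icc) ?_
    refine MeasurableSet.inter (m2 measurableSet_Icc) ?_
    refine MeasurableSet.inter (measurableSet_le (by fun_prop) m3) ?_
    refine MeasurableSet.inter (measurableSet_le (by fun_prop) m3) ?_
    exact MeasurableSet.inter (measurableSet_le m3 (by fun_prop))
      (measurableSet_le m3 (by fun_prop))
  have step0 : volume S = ∫⁻ x, (volume : Measure (ℝ × ℝ)) (Prod.mk x ⁻¹' S) := by
    rw [Measure.volume_eq_prod, Measure.prod_apply hS]
  have slice : ∀ x y : ℝ, Prod.mk y ⁻¹' (Prod.mk x ⁻¹' S) = {z : ℝ | x ∈ Icc xl xu ∧ y ∈ Icc yl yu ∧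
        xl * y + x * yl - xl * yl ≤ z ∧ xu * y + x * yu - xu * yu ≤ z ∧
        z ≤ xu * y + x * yl - xu * yl ∧ z ≤ xl * y + x * yu - xl * yu} := fun x y => rfl
  have step1 : ∀ x : ℝ, (volume : Measure (ℝ × ℝ)) (Prod.mk x ⁻¹' S) =
      Set.indicator (Icc xl xu)
        (fun x => ∫⁻ y in Icc yl yu, ENNReal.ofReal
          (min (min ((xu - xl) * (y - yl)) ((xu - xl) * (yu - y)))
            ((yu - yl) * min (x - xl) (xu - x)))) x := by
    intro x
    rw [Measure.volume_eq_prod, Measure.prod_apply (hS.preimage measurable_prodMk_left)]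
    by_cases hxm : x ∈ Icc xl xu
    · rw [indicator_of_mem hxm, ← lintegral_indicator measurableSet_Icc]
      refine lintegral_congr fun y => ?_
      by_cases hym : y ∈ Icc yl yu
      · rw [indicator_of_mem hym, slice x y]
        have hset : {z : ℝ | x ∈ Icc xl xu ∧ y ∈ Icc yl yu ∧
        xl * y + x * yl - xl * yl ≤ z ∧ xu * y + x * yu - xu * yu ≤ z ∧
        z ≤ xu * y + x * yl - xu * yl ∧ z ≤ xl * y + x * yu - xl * yu}
            = Icc (max (xl * y + x * yl - xl * yl) (xu * y + x * yu - xu * yu))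
                (min (xu * y + x * yl - xu * yl) (xl * y + x * yu - xl * yu)) := by
          ext z
          simp only [mem_setOf_eq, mem_Icc, max_le_iff, le_min_iff, hxm, hym, true_and]
          tauto
        rw [hset, Real.volume_Icc, gap_eq' xl xu yl yu hly.le x y]
      · rw [indicator_of_notMem hym, slice x y]
        have hset : {z : ℝ | x ∈ Icc xl xu ∧ y ∈ Icc yl yu ∧
        xl * y + x * yl - xl * yl ≤ z ∧ xu * y + x * yu - xu * yu ≤ z ∧
        z ≤ xu * y + x * yl - xu * yl ∧ z ≤ xl * y + x * yu - xl * yu} = (∅ : Set ℝ) := by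
          ext z; simp [hym]
        rw [hset, measure_empty]
    · rw [indicator_of_notMem hxm]
      have hempty : ∀ y : ℝ, Prod.mk y ⁻¹' (Prod.mk x ⁻¹' S) = (∅ : Set ℝ) := by
        intro y; rw [slice x y]; ext z; simp [hxm]
      simp [hempty]
  have step2 : ∀ x ∈ Icc xl xu,
      (∫⁻ y in Icc yl yu, ENNReal.ofReal
          (min (min ((xu - xl) * (y - yl)) ((xu - xl) * (yu - y)))
            ((yu - yl) * min (x - xl) (xu - x))))
      = ENNReal.ofReal (((yu - yl) * min (x - xl) (xu - x)) * (yu - yl)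
          - ((yu - yl) * min (x - xl) (xu - x)) ^ 2 / (xu - xl)) := by
    intro x hxm
    obtain ⟨hx1, hx2⟩ := hxm
    have hmin0 : 0 ≤ min (x - xl) (xu - x) := le_min (by linarith) (by linarith)
    have hQ0 : 0 ≤ (yu - yl) * min (x - xl) (xu - x) := mul_nonneg hly.le hmin0
    have hminle : min (x - xl) (xu - x) ≤ (xu - xl) / 2 := by
      have h1 := min_le_left (x - xl) (xu - x)
      have h2 := min_le_right (x - xl) (xu - x)
      linarith
    have hQle : (yu - yl) * min (x - xl) (xu - x) ≤ (xu - xl) * (yu - yl) / 2 := by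
      have h1 := mul_le_mul_of_nonneg_left hminle hly.le
      have h2 : (yu - yl) * ((xu - xl) / 2) = (xu - xl) * (yu - yl) / 2 := by ring
      linarith
    have hGint : IntegrableOn (fun y =>
        min (min ((xu - xl) * (y - yl)) ((xu - xl) * (yu - y)))
          ((yu - yl) * min (x - xl) (xu - x))) (Icc yl yu) volume :=
      Continuous.integrableOn_Icc (by fun_prop)
    have hGnn : 0 ≤ᵐ[volume.restrict (Icc yl yu)] fun y =>
        min (min ((xu - xl) * (y - yl)) ((xu - xl) * (yu - y)))
          ((yu - yl) * min (x - xl) (xu - x)) := by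
      refine (ae_restrict_iff' measurableSet_Icc).mpr (ae_of_all _ fun y hym => ?_)
      obtain ⟨hy1, hy2⟩ := hym
      exact le_min (le_min (mul_nonneg hlx.le (by linarith))
        (mul_nonneg hlx.le (by linarith))) hQ0
    rw [← ofReal_integral_eq_lintegral_ofReal hGint hGnn]
    congr 1
    rw [integral_Icc_eq_integral_Ioc, ← intervalIntegral.integral_of_le hy]
    exact inner_int (xu - xl) yl yu _ hlx hy hQ0 hQle
  have hf_cont : Continuous (fun x : ℝ =>
      ((yu - yl) * min (x - xl) (xu - x)) * (yu - yl)
        - ((yu - yl) * min (x - xl) (xu - x)) ^ 2 / (xu - xl)) := by fun_prop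
  have hfnn : 0 ≤ᵐ[volume.restrict (Icc xl xu)] fun x : ℝ =>
      ((yu - yl) * min (x - xl) (xu - x)) * (yu - yl)
        - ((yu - yl) * min (x - xl) (xu - x)) ^ 2 / (xu - xl) := by
    refine (ae_restrict_iff' measurableSet_Icc).mpr (ae_of_all _ fun x hxm => ?_)
    obtain ⟨hx1, hx2⟩ := hxm
    have hmin0 : 0 ≤ min (x - xl) (xu - x) := le_min (by linarith) (by linarith)
    have hQ0 : 0 ≤ (yu - yl) * min (x - xl) (xu - x) := mul_nonneg hly.le hmin0
    have hminle : min (x - xl) (xu - x) ≤ (xu - xl) / 2 := by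
      have h1 := min_le_left (x - xl) (xu - x)
      have h2 := min_le_right (x - xl) (xu - x)
      linarith
    have hQle : (yu - yl) * min (x - xl) (xu - x) ≤ (xu - xl) * (yu - yl) / 2 := by
      have h1 := mul_le_mul_of_nonneg_left hminle hly.le
      have h2 : (yu - yl) * ((xu - xl) / 2) = (xu - xl) * (yu - yl) / 2 := by ring
      linarith
    simp only [Pi.zero_apply]
    rw [sub_nonneg, div_le_iff₀ hlx]
    nlinarith [mul_le_mul_of_nonneg_left hQle hQ0]
  rw [step0, lintegral_congr step1, lintegral_indicator measurableSet_Icc,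
    setLIntegral_congr_fun measurableSet_Icc step2,
    ← ofReal_integral_eq_lintegral_ofReal (hf_cont.integrableOn_Icc) hfnn]
  congr 1
  rw [integral_Icc_eq_integral_Ioc, ← intervalIntegral.integral_of_le hx]
  exact outer_int xl xu (yu - yl) hx' hly.le
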